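/- Let K ∈ ℕ⁺ and J_1,…,J_K ∈ ℕ⁺ with J = ∏_{k=1}^K J_k, and set L_k = ∏_{k'=1}^k J_{k'}. Index the functions c̃^{j̲}(z) by j̲ ∈ N_{J̲} = {0} ∪ ({1,…,2J_1}×{1,…,J_2}×…×{1,…,J_K}), where c̃^0(z) = 1 and, for j̲ = (j_1,…,j_K), c̃^{j̲}(z) = c^{j_1}(z)·∏_{k=2}^K cos(2·L_{k−1}·z)^{j_k − 1}, with c^{2j−1}(z) = cos(z)^{2j−1} and c^{2j}(z) = sin(z)·cos(z)^{2j−2} for j ∈ ℕ⁺. Then there exists a linear map T : ℝ^{N_{J̲}} → ℝ^{2J+1} such that for every z ∈ (0,1), the vector (c_0(z), c_1(z), …, c_{2J}(z)) equals T applied to the vector (c̃^{j̲}(z))_{j̲ ∈ N_{J̲}}. -/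

import Mathlib

/-- `cfun j x`: c₀(x)=1, c_{2j-1}(x)=cos((2j-1)x), c_{2j}(x)=sin((2j-1)x). -/
noncomputable def cfun (j : ℕ) (x : ℝ) : ℝ :=
  if j = 0 then 1
  else if j % 2 = 1 then Real.cos ((j : ℝ) * x)
  else Real.sin (((j : ℝ) - 1) * x)

/-- `csmall n z`: c^{2j−1}(z) = cos(z)^{2j−1}, c^{2j}(z) = sin(z)·cos(z)^{2j−2}, for n ≥ 1. -/
noncomputable def csmall (n : ℕ) (z : ℝ) : ℝ :=
  if n % 2 = 1 then (Real.cos z) ^ n else Real.sin z * (Real.cos z) ^ (n - 2)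

/-- The index set N_{J̲} = {0} ∪ ({1,…,2J₁}×{1,…,J₂}×…×{1,…,J_K}); the `none`
element plays the role of the index 0, and `some j` encodes the tuple whose kth entry
is `(j k).val + 1`. -/
def NIdx (K : ℕ) (Js : Fin K → ℕ) : Type :=
  Option ((k : Fin K) → Fin (if k.val = 0 then 2 * Js k else Js k))

/-- `Lfun Js k = ∏_{k' < k} J_{k'}` (the partial products L_k, 0-indexed). -/
def Lfun {K : ℕ} (Js : Fin K → ℕ) (k : ℕ) : ℕ :=
  ∏ k' ∈ Finset.univ.filter (fun k' : Fin K => k'.val < k), Js k'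

/-- `ctilde`: c̃^0(z) = 1 and, for j̲ = (j₁,…,j_K),
c̃^{j̲}(z) = c^{j₁}(z)·∏_{k=2}^K cos(2·L_{k−1}·z)^{j_k − 1}. -/
noncomputable def ctilde {K : ℕ} (Js : Fin K → ℕ) (hK : 0 < K)
    (j : NIdx K Js) (z : ℝ) : ℝ :=
  match j with
  | none => 1
  | some jv =>
      csmall ((jv ⟨0, hK⟩).val + 1) z *
        ∏ k ∈ Finset.univ.filter (fun k : Fin K => 0 < k.val),
          (Real.cos (2 * (Lfun Js k.val : ℝ) * z)) ^ (jv k).val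

section TrigAux

open Real Finset Submodule

/-- frequency-`w` cosine as a function. -/
noncomputable def Cc (w : ℤ) : ℝ → ℝ := fun z => Real.cos (w * z)

/-- `φ` at frequency `m`. -/
noncomputable def Ff (φ : ℝ → ℝ) (m : ℤ) : ℝ → ℝ := fun z => φ (m * z)

/-- span of `φ` at odd frequencies of absolute value ≤ a. -/
noncomputable def Wodd (φ : ℝ → ℝ) (a : ℤ) : Submodule ℝ (ℝ → ℝ) :=
  Submodule.span ℝ {f | ∃ m : ℤ, Odd m ∧ |m| ≤ a ∧ f = Ff φ m}

/-- predicate: f = c · φ(m·) + lower-order odd terms. -/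
def Pp (φ : ℝ → ℝ) (f : ℝ → ℝ) (m : ℤ) : Prop :=
  ∃ c : ℝ, c ≠ 0 ∧ ∃ g ∈ Wodd φ (m - 2), f = c • Ff φ m + g

variable {φ : ℝ → ℝ}

lemma Wodd_mono {a b : ℤ} (h : a ≤ b) : Wodd φ a ≤ Wodd φ b :=
  Submodule.span_mono (fun f ⟨m, h1, h2, h3⟩ => ⟨m, h1, le_trans h2 h, h3⟩)

lemma mem_Wodd {m a : ℤ} (h1 : Odd m) (h2 : |m| ≤ a) : Ff φ m ∈ Wodd φ a :=
  Submodule.subset_span ⟨m, h1, h2, rfl⟩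

lemma Ff_mul_Cc (hφ : ∀ x y, φ (x + y) + φ (x - y) = 2 * φ x * Real.cos y)
    (m w : ℤ) :
    Ff φ m * Cc w = (1/2 : ℝ) • Ff φ (m + w) + (1/2 : ℝ) • Ff φ (m - w) := by
  funext z
  have := hφ (m * z) (w * z)
  simp only [Ff, Cc, Pi.mul_apply, Pi.add_apply, Pi.smul_apply, smul_eq_mul]
  push_cast
  rw [add_mul, sub_mul]
  linarith

lemma mul_Cc_mem (hφ : ∀ x y, φ (x + y) + φ (x - y) = 2 * φ x * Real.cos y)
    {a w : ℤ} (hw : Even w) (hw0 : 0 ≤ w) {g : ℝ → ℝ} (hg : g ∈ Wodd φ a) :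
    g * Cc w ∈ Wodd φ (a + w) := by
  induction hg using Submodule.span_induction with
  | mem f hf =>
      obtain ⟨m, hm, hma, rfl⟩ := hf
      rw [Ff_mul_Cc hφ]
      refine add_mem (smul_mem _ _ (mem_Wodd (hm.add_even hw) ?_))
        (smul_mem _ _ (mem_Wodd (hm.sub_even hw) ?_))
      · calc |m + w| ≤ |m| + |w| := abs_add_le _ _
          _ ≤ a + w := by rw [abs_of_nonneg hw0]; omega
      · calc |m - w| ≤ |m| + |w| := abs_sub _ _
          _ ≤ a + w := by rw [abs_of_nonneg hw0]; omega
  | zero => rw [zero_mul]; exact zero_mem _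
  | add x y hx hy ihx ihy => rw [add_mul]; exact add_mem ihx ihy
  | smul c x hx ihx => rw [smul_mul_assoc]; exact smul_mem _ _ ihx

lemma step_Cc (hφ : ∀ x y, φ (x + y) + φ (x - y) = 2 * φ x * Real.cos y)
    {f : ℝ → ℝ} {m w : ℤ} (hm : Odd m) (hm1 : 1 ≤ m)
    (hw : Even w) (hw2 : 2 ≤ w) (hf : Pp φ f m) : Pp φ (f * Cc w) (m + w) := by
  obtain ⟨c, hc, g, hg, rfl⟩ := hf
  refine ⟨c / 2, by positivity, (c / 2) • Ff φ (m - w) + g * Cc w, ?_, ?_⟩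
  · refine add_mem (smul_mem _ _ (mem_Wodd (hm.sub_even hw) ?_)) ?_
    · rw [abs_le]; omega
    · have := mul_Cc_mem hφ hw (by omega) hg
      exact Wodd_mono (by omega) this
  · rw [add_mul, smul_mul_assoc, Ff_mul_Cc hφ]
    funext z
    simp only [Pi.add_apply, Pi.smul_apply, smul_eq_mul, Pi.mul_apply]
    ring

/-- cos squared, as a multiplier. -/
noncomputable def cossq : ℝ → ℝ := fun z => Real.cos z ^ 2

lemma cossq_eq : cossq = (1/2 : ℝ) • Cc 2 + (1/2 : ℝ) • (1 : ℝ → ℝ) := by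
  funext z
  have := Real.cos_sq z
  simp only [cossq, Cc, Pi.add_apply, Pi.smul_apply, Pi.one_apply, smul_eq_mul]
  push_cast
  linarith

lemma step_sq (hφ : ∀ x y, φ (x + y) + φ (x - y) = 2 * φ x * Real.cos y)
    {f : ℝ → ℝ} {m : ℤ} (hm : Odd m) (hm1 : 1 ≤ m)
    (hf : Pp φ f m) : Pp φ (f * cossq) (m + 2) := by
  obtain ⟨c2, hc2, g2, hg2, h2⟩ := step_Cc hφ hm hm1 (by decide : Even (2:ℤ)) le_rfl hf
  obtain ⟨c, hc, g, hg, hfe⟩ := hf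
  refine ⟨c2 / 2, by positivity, (1/2 : ℝ) • g2 + (c/2) • Ff φ m + (1/2 : ℝ) • g, ?_, ?_⟩
  · refine add_mem (add_mem (smul_mem _ _ (Wodd_mono (by omega) hg2))
      (smul_mem _ _ (mem_Wodd hm (by rw [abs_le]; omega))))
      (smul_mem _ _ (Wodd_mono (by omega) hg))
  · have e1 : f * cossq = (1/2 : ℝ) • (f * Cc 2) + (1/2 : ℝ) • f := by
      rw [cossq_eq]
      funext z
      simp only [Pi.mul_apply, Pi.add_apply, Pi.smul_apply, Pi.one_apply, smul_eq_mul]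
      ring
    rw [e1, h2]
    rw [hfe]
    funext z
    simp only [Pi.add_apply, Pi.smul_apply, smul_eq_mul, Pi.mul_apply]
    ring

lemma step_pow (hφ : ∀ x y, φ (x + y) + φ (x - y) = 2 * φ x * Real.cos y)
    {f : ℝ → ℝ} {m w : ℤ} (hm : Odd m) (hm1 : 1 ≤ m)
    (hw : Even w) (hw2 : 2 ≤ w) (hf : Pp φ f m) (e : ℕ) :
    Pp φ (f * Cc w ^ e) (m + w * e) := by
  induction e with
  | zero => simpa using hf
  | succ e ih =>
      have h1 : Odd (m + w * e) := hm.add_even (hw.mul_right _)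
      have h2 : (1:ℤ) ≤ m + w * e := by nlinarith [Int.natCast_nonneg e]
      have := step_Cc hφ h1 h2 hw hw2 ih
      have heq : m + w * ((e:ℤ)+1) = m + w * e + w := by ring
      rw [pow_succ, ← mul_assoc]
      push_cast
      rw [heq]
      exact this

lemma hcos : ∀ x y : ℝ, Real.cos (x + y) + Real.cos (x - y) = 2 * Real.cos x * Real.cos y := by
  intro x y; rw [Real.cos_add, Real.cos_sub]; ring

lemma hsin : ∀ x y : ℝ, Real.sin (x + y) + Real.sin (x - y) = 2 * Real.sin x * Real.cos y := by
  intro x y; rw [Real.sin_add, Real.sin_sub]; ring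

lemma even_sum' {ι : Type*} (s : Finset ι) (g : ι → ℤ) (h : ∀ i ∈ s, Even (g i)) :
    Even (∑ i ∈ s, g i) := by
  classical
  induction s using Finset.induction with
  | empty => simp
  | insert _ _ ha ih =>
      rw [Finset.sum_insert ha]
      exact (h _ (Finset.mem_insert_self _ _)).add
        (ih fun i hi => h i (Finset.mem_insert_of_mem hi))

lemma step_prod {ι : Type*} (hφ : ∀ x y, φ (x + y) + φ (x - y) = 2 * φ x * Real.cos y)
    {f : ℝ → ℝ} {m : ℤ} (hm : Odd m) (hm1 : 1 ≤ m) (hf : Pp φ f m)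
    (w : ι → ℤ) (e : ι → ℕ) (s : Finset ι) (hw : ∀ i ∈ s, Even (w i) ∧ 2 ≤ w i) :
    Pp φ (f * ∏ i ∈ s, Cc (w i) ^ (e i)) (m + ∑ i ∈ s, w i * e i) := by
  classical
  induction s using Finset.induction with
  | empty => simpa using hf
  | insert _ _ ha ih =>
      rename_i a s
      have hws : ∀ i ∈ s, Even (w i) ∧ 2 ≤ w i :=
        fun i hi => hw i (Finset.mem_insert_of_mem hi)
      have ihs := ih hws
      have hsum_even : Even (∑ i ∈ s, w i * e i) :=
        even_sum' s _ (fun i hi => ((hws i hi).1).mul_right _)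
      have hsum_nonneg : (0:ℤ) ≤ ∑ i ∈ s, w i * e i :=
        Finset.sum_nonneg fun i hi =>
          mul_nonneg (by have := (hws i hi).2; omega) (Int.natCast_nonneg _)
      have hodd : Odd (m + ∑ i ∈ s, w i * e i) := hm.add_even hsum_even
      have h1 : (1:ℤ) ≤ m + ∑ i ∈ s, w i * e i := by omega
      have ha' := hw a (Finset.mem_insert_self _ _)
      have := step_pow hφ hodd h1 ha'.1 ha'.2 ihs (e a)
      rw [Finset.prod_insert ha, Finset.sum_insert ha]
      have heq1 : f * (Cc (w a) ^ e a * ∏ i ∈ s, Cc (w i) ^ e i)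
          = f * (∏ i ∈ s, Cc (w i) ^ e i) * Cc (w a) ^ e a := by ring
      have heq2 : m + (w a * e a + ∑ i ∈ s, w i * e i)
          = m + ∑ i ∈ s, w i * e i + w a * e a := by ring
      rw [heq1, heq2]
      exact this

lemma base_cos (d : ℕ) :
    Pp Real.cos (fun z => Real.cos z ^ (2*d+1)) (2*(d:ℤ)+1) := by
  induction d with
  | zero =>
      refine ⟨1, one_ne_zero, 0, zero_mem _, ?_⟩
      funext z
      simp [Ff]
  | succ d ih =>
      have hodd : Odd (2*(d:ℤ)+1) := ⟨d, by ring⟩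
      have := step_sq hcos hodd (by omega) ih
      have heq : (fun z => Real.cos z ^ (2*(d+1)+1))
          = (fun z => Real.cos z ^ (2*d+1)) * cossq := by
        funext z
        simp only [Pi.mul_apply, cossq, ← pow_add]
        ring_nf
      rw [heq]
      have heq2 : 2*((d:ℤ)+1)+1 = 2*(d:ℤ)+1+2 := by ring
      push_cast
      rw [heq2]
      exact this

lemma base_sin (d : ℕ) :
    Pp Real.sin (fun z => Real.sin z * Real.cos z ^ (2*d)) (2*(d:ℤ)+1) := by
  induction d with
  | zero =>
      refine ⟨1, one_ne_zero, 0, zero_mem _, ?_⟩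
      funext z
      simp [Ff]
  | succ d ih =>
      have hodd : Odd (2*(d:ℤ)+1) := ⟨d, by ring⟩
      have := step_sq hsin hodd (by omega) ih
      have heq : (fun z => Real.sin z * Real.cos z ^ (2*(d+1)))
          = (fun z => Real.sin z * Real.cos z ^ (2*d)) * cossq := by
        funext z
        simp only [Pi.mul_apply, cossq]
        ring
      rw [heq]
      have heq2 : 2*((d:ℤ)+1)+1 = 2*(d:ℤ)+1+2 := by ring
      push_cast
      rw [heq2]
      exact this

end TrigAux

section Digits

lemma Lfun_zero {K : ℕ} (Js : Fin K → ℕ) : Lfun Js 0 = 1 := by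
  unfold Lfun
  rw [Finset.filter_false_of_mem (by intro k _; omega)]
  simp

lemma Lfun_succ {K : ℕ} (Js : Fin (K+1) → ℕ) (k : ℕ) :
    Lfun Js (k+1) = Js 0 * Lfun (Js ∘ Fin.succ) k := by
  unfold Lfun
  rw [Finset.prod_filter, Finset.prod_filter, Fin.prod_univ_succ]
  simp only [Fin.val_zero, Fin.val_succ, Function.comp_apply]
  congr 1
  · simp

lemma Lfun_pos {K : ℕ} (Js : Fin K → ℕ) (hJs : ∀ k, 0 < Js k) (k : ℕ) :
    0 < Lfun Js k :=
  Finset.prod_pos fun i _ => hJs i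

lemma digits_exist : ∀ (K : ℕ) (Js : Fin K → ℕ), (∀ k, 0 < Js k) →
    ∀ n, n < ∏ k, Js k →
    ∃ e : Fin K → ℕ, (∀ k, e k < Js k) ∧ n = ∑ k, Lfun Js k.val * e k := by
  intro K
  induction K with
  | zero =>
      intro Js _ n hn
      simp only [Finset.univ_eq_empty, Finset.prod_empty] at hn
      exact ⟨fun k => k.elim0, fun k => k.elim0, by
        interval_cases n
        simp⟩
  | succ K ih =>
      intro Js hJs n hn
      have hJ0 : 0 < Js 0 := hJs 0
      have hprod : (∏ k, Js k) = Js 0 * ∏ k : Fin K, Js (Fin.succ k) :=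
        Fin.prod_univ_succ Js
      have hq : n / Js 0 < ∏ k : Fin K, Js (Fin.succ k) := by
        rw [Nat.div_lt_iff_lt_mul hJ0]
        rw [hprod, mul_comm] at hn
        exact hn
      obtain ⟨e', he', hsum'⟩ := ih (Js ∘ Fin.succ) (fun k => hJs _) (n / Js 0) hq
      refine ⟨Fin.cases (n % Js 0) e', ?_, ?_⟩
      · intro k
        induction k using Fin.cases with
        | zero => simpa using Nat.mod_lt n hJ0
        | succ k => simpa using he' k
      · rw [Fin.sum_univ_succ]
        simp only [Fin.cases_zero, Fin.cases_succ, Fin.val_zero, Fin.val_succ]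
        rw [Lfun_zero]
        have hls : ∀ k : Fin K, Lfun Js (k.val + 1) = Js 0 * Lfun (Js ∘ Fin.succ) k.val :=
          fun k => Lfun_succ Js k.val
        calc n = n % Js 0 + Js 0 * (n / Js 0) := (Nat.mod_add_div n (Js 0)).symm
          _ = n % Js 0 + Js 0 * ∑ k : Fin K, Lfun (Js ∘ Fin.succ) k.val * e' k := by
              rw [← hsum']
          _ = 1 * (n % Js 0) + ∑ k : Fin K, Lfun Js (k.val + 1) * e' k := by
              rw [Finset.mul_sum]
              simp only [hls]
              ring_nf

end Digits

instance NIdx.fintype (K : ℕ) (Js : Fin K → ℕ) : Fintype (NIdx K Js) := by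
  unfold NIdx; infer_instance

section Main

open Real Finset Submodule

variable {K : ℕ} (Js : Fin K → ℕ) (hK : 0 < K)

/-- the generating family of functions. -/
noncomputable def genFun : NIdx K Js → (ℝ → ℝ) := fun i z => ctilde Js hK i z

/-- the span of the generating family. -/
noncomputable def Sspan : Submodule ℝ (ℝ → ℝ) :=
  Submodule.span ℝ (Set.range (genFun Js hK))

lemma exists_gen (hJs : ∀ k, 0 < Js k) (a : ℕ) (h1 : 1 ≤ a) (ha : a ≤ ∏ k, Js k)
    (t : ℕ) (ht : t ≤ 1) :
    ∃ G ∈ Sspan Js hK, Pp (if t = 0 then Real.cos else Real.sin) G (2*(a:ℤ)-1) := by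
  obtain ⟨e, he, hsum⟩ := digits_exist K Js hJs (a-1) (by omega)
  set k0 : Fin K := ⟨0, hK⟩ with hk0
  have ht' : t = 0 ∨ t = 1 := by omega
  set jv : (k : Fin K) → Fin (if k.val = 0 then 2 * Js k else Js k) := fun k =>
    ⟨if k.val = 0 then 2 * e k + t else e k, by
      have := he k; split_ifs <;> omega⟩ with hjv
  refine ⟨genFun Js hK (some jv), Submodule.subset_span (Set.mem_range_self _), ?_⟩
  have hGen : genFun Js hK (some jv)
      = (fun z => csmall (2 * e k0 + t + 1) z)
        * ∏ k ∈ Finset.univ.filter (fun k : Fin K => 0 < k.val),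
            Cc (2 * (Lfun Js k.val : ℤ)) ^ (e k) := by
    funext z
    simp only [genFun, ctilde, Pi.mul_apply, Finset.prod_apply, Pi.pow_apply, Cc, hjv]
    refine congrArg₂ HMul.hMul ?_ (Finset.prod_congr rfl ?_)
    · simp [hk0]
    · intro k hk
      have hk0' : ¬((k : ℕ) = 0) := by simp only [Finset.mem_filter] at hk; omega
      rw [if_neg hk0']
      norm_num
  rw [hGen]
  -- the base function
  have hbase : Pp (if t = 0 then Real.cos else Real.sin)
      (fun z => csmall (2 * e k0 + t + 1) z) (2*(e k0 : ℤ)+1) := by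
    rcases ht' with rfl | rfl
    · have hfe : (fun z => csmall (2 * e k0 + 0 + 1) z)
          = (fun z => Real.cos z ^ (2 * (e k0) + 1)) := by
        funext z
        have h2 : (2 * e k0 + 0 + 1) % 2 = 1 := by omega
        simp [csmall, h2]
      rw [if_pos rfl, hfe]
      exact base_cos (e k0)
    · have hfe : (fun z => csmall (2 * e k0 + 1 + 1) z)
          = (fun z => Real.sin z * Real.cos z ^ (2 * (e k0))) := by
        funext z
        have h2 : (2 * e k0 + 1 + 1) % 2 = 0 := by omega
        simp [csmall, h2]
      rw [if_neg one_ne_zero, hfe]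
      exact base_sin (e k0)
  have hφ : ∀ x y, (if t = 0 then Real.cos else Real.sin) (x + y)
      + (if t = 0 then Real.cos else Real.sin) (x - y)
      = 2 * (if t = 0 then Real.cos else Real.sin) x * Real.cos y := by
    rcases ht' with rfl | rfl
    · simpa using hcos
    · simpa using hsin
  have hodd : Odd (2*(e k0 : ℤ)+1) := ⟨e k0, by ring⟩
  have h1' : (1:ℤ) ≤ 2*(e k0 : ℤ)+1 := by
    have := Int.natCast_nonneg (e k0); omega
  have hstep := step_prod hφ hodd h1' hbase
    (fun k : Fin K => 2 * (Lfun Js k.val : ℤ)) e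
    (Finset.univ.filter (fun k : Fin K => 0 < k.val))
    (by
      intro k _
      constructor
      · exact ⟨(Lfun Js k.val : ℤ), by ring⟩
      · have := Lfun_pos Js hJs k.val
        show (2:ℤ) ≤ 2 * (Lfun Js k.val : ℤ)
        omega)
  have hsplit : (∑ k, Lfun Js k.val * e k)
      = e k0 + ∑ k ∈ Finset.univ.filter (fun k : Fin K => 0 < k.val), Lfun Js k.val * e k := by
    rw [← Finset.sum_filter_add_sum_filter_not Finset.univ (fun k : Fin K => 0 < k.val)]
    have hnot : Finset.univ.filter (fun k : Fin K => ¬ 0 < k.val) = {k0} := by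
      ext k
      simp only [Finset.mem_filter, Finset.mem_univ, true_and, Finset.mem_singleton,
        Fin.ext_iff, hk0]
      omega
    rw [hnot, Finset.sum_singleton]
    have hv : (k0 : ℕ) = 0 := rfl
    rw [hv, Lfun_zero, one_mul, add_comm]
  rw [hsplit] at hsum
  have hcast : (2*(a:ℤ)-1) = (2*((e k0 : ℕ) : ℤ)+1)
      + ∑ k ∈ Finset.univ.filter (fun k : Fin K => 0 < k.val),
          (2*(Lfun Js k.val : ℤ)) * (e k : ℤ) := by
    have h : ((a : ℤ) - 1) = ((e k0 : ℕ) : ℤ)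
        + ∑ k ∈ Finset.univ.filter (fun k : Fin K => 0 < k.val),
            ((Lfun Js k.val : ℤ)) * (e k : ℤ) := by
      calc (a:ℤ) - 1 = ((a - 1 : ℕ) : ℤ) := by omega
        _ = _ := by rw [hsum]; push_cast; ring
    have hs2 : ∑ k ∈ Finset.univ.filter (fun k : Fin K => 0 < k.val),
          (2*(Lfun Js k.val : ℤ)) * (e k : ℤ)
        = 2 * ∑ k ∈ Finset.univ.filter (fun k : Fin K => 0 < k.val),
            ((Lfun Js k.val : ℤ)) * (e k : ℤ) := by
      rw [Finset.mul_sum]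
      exact Finset.sum_congr rfl (fun _ _ => by ring)
    rw [hs2]
    linarith
  rw [hcast]
  exact hstep


lemma main_mem (φ : ℝ → ℝ) (ε : ℝ) (hε : ∀ x, φ (-x) = ε * φ x)
    (H : ∀ a : ℕ, 1 ≤ a → a ≤ ∏ k, Js k → ∃ G ∈ Sspan Js hK, Pp φ G (2*(a:ℤ)-1)) :
    ∀ a : ℕ, 1 ≤ a → a ≤ ∏ k, Js k → Ff φ (2*(a:ℤ)-1) ∈ Sspan Js hK := by
  intro a
  induction a using Nat.strong_induction_on with
  | _ a ih =>
    intro h1 ha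
    obtain ⟨G, hGS, c, hc, g, hg, hEq⟩ := H a h1 ha
    -- every member of Wodd φ (2a-3) lies in the span
    have hW : Wodd φ (2*(a:ℤ)-1-2) ≤ Sspan Js hK := by
      rw [Wodd]
      apply Submodule.span_le.mpr
      rintro f ⟨μ, hodd, habs, rfl⟩
      have hpos : ∀ ν : ℤ, Odd ν → 0 < ν → ν ≤ 2*(a:ℤ)-1-2 → Ff φ ν ∈ Sspan Js hK := by
        intro ν hνodd hν0 hνle
        obtain ⟨k, hk⟩ := hνodd
        have hk0 : 0 ≤ k := by omega
        have hb1 : 1 ≤ k.toNat + 1 := by omega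
        have hblt : k.toNat + 1 < a := by omega
        have hble : k.toNat + 1 ≤ ∏ k, Js k := by omega
        have := ih (k.toNat + 1) hblt hb1 hble
        have hcast : ν = 2*((k.toNat + 1 : ℕ) : ℤ)-1 := by push_cast; omega
        rw [hcast]
        exact this
      rcases lt_trichotomy μ 0 with hneg | h0 | hposμ
      · have h1' : Ff φ μ = ε • Ff φ (-μ) := by
          funext z
          simp only [Ff, Pi.smul_apply, smul_eq_mul]
          rw [← hε]
          congr 1
          push_cast
          ring
        rw [h1']
        refine Submodule.smul_mem _ _ (hpos (-μ) hodd.neg (by omega) ?_)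
        rw [abs_le] at habs; omega
      · exfalso; obtain ⟨k, hk⟩ := hodd; omega
      · exact hpos μ hodd hposμ (by rw [abs_le] at habs; omega)
    have hgS : g ∈ Sspan Js hK := hW hg
    have hsub : G - g ∈ Sspan Js hK := sub_mem hGS hgS
    have hFf : Ff φ (2*(a:ℤ)-1) = c⁻¹ • (G - g) := by
      rw [hEq, add_sub_cancel_right, smul_smul, inv_mul_cancel₀ hc, one_smul]
    rw [hFf]
    exact Submodule.smul_mem _ _ hsub

lemma cfun_mem (hJs : ∀ k, 0 < Js k) (j : ℕ) (hj : j ≤ 2 * ∏ k, Js k) :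
    (fun z => cfun j z) ∈ Sspan Js hK := by
  have hJpos : 0 < ∏ k, Js k := Finset.prod_pos fun i _ => hJs i
  have hcosmem : ∀ a : ℕ, 1 ≤ a → a ≤ ∏ k, Js k →
      Ff Real.cos (2*(a:ℤ)-1) ∈ Sspan Js hK := by
    apply main_mem Js hK Real.cos 1 (by intro x; rw [Real.cos_neg]; ring)
    intro a h1 ha
    simpa using exists_gen Js hK hJs a h1 ha 0 (by omega)
  have hsinmem : ∀ a : ℕ, 1 ≤ a → a ≤ ∏ k, Js k →
      Ff Real.sin (2*(a:ℤ)-1) ∈ Sspan Js hK := by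
    apply main_mem Js hK Real.sin (-1) (by intro x; rw [Real.sin_neg]; ring)
    intro a h1 ha
    simpa using exists_gen Js hK hJs a h1 ha 1 (by omega)
  by_cases h0 : j = 0
  · have : (fun z => cfun j z) = genFun Js hK none := by
      funext z; simp [cfun, h0, genFun, ctilde]
    rw [this]
    exact Submodule.subset_span (Set.mem_range_self _)
  by_cases hodd : j % 2 = 1
  · set a := (j + 1) / 2 with hadef
    have h1 : 1 ≤ a := by omega
    have ha : a ≤ ∏ k, Js k := by omega
    have := hcosmem a h1 ha
    have heq : (fun z => cfun j z) = Ff Real.cos (2*(a:ℤ)-1) := by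
      funext z
      simp only [cfun, h0, hodd, if_false, if_true, Ff]
      congr 1
      have : (j : ℤ) = 2*(a:ℤ)-1 := by omega
      push_cast [← this]
      ring
    rw [heq]
    exact this
  · set a := j / 2 with hadef
    have h1 : 1 ≤ a := by omega
    have ha : a ≤ ∏ k, Js k := by omega
    have := hsinmem a h1 ha
    have heq : (fun z => cfun j z) = Ff Real.sin (2*(a:ℤ)-1) := by
      funext z
      simp only [cfun, h0, hodd, if_false, Ff]
      congr 1
      have : (j : ℤ) - 1 = 2*(a:ℤ)-1 := by omega
      push_cast [← this]
      push_cast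
      ring
    rw [heq]
    exact this

end Main

/-- there is a linear map T sending the vector (c̃^{j̲}(z))_{j̲ ∈ N_{J̲}}
to the vector (c₀(z), …, c_{2J}(z)) simultaneously for every z ∈ (0,1). -/
theorem exists_linear_transform_1d (K : ℕ) (hK : 0 < K) (Js : Fin K → ℕ)
    (hJs : ∀ k, 0 < Js k) :
    ∃ T : (NIdx K Js → ℝ) →ₗ[ℝ] (Fin (2 * (∏ k, Js k) + 1) → ℝ),
      ∀ z ∈ Set.Ioo (0 : ℝ) 1,
        T (fun j => ctilde Js hK j z) = fun j => cfun j.val z := by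
  classical
  have hmem : ∀ j : Fin (2 * (∏ k, Js k) + 1),
      (fun z => cfun j.val z) ∈ Sspan Js hK :=
    fun j => cfun_mem Js hK hJs j.val (by omega)
  have hex : ∀ j : Fin (2 * (∏ k, Js k) + 1),
      ∃ c : NIdx K Js → ℝ, ∑ i, c i • genFun Js hK i = (fun z => cfun j.val z) := by
    intro j
    exact (Submodule.mem_span_range_iff_exists_fun ℝ).mp (hmem j)
  choose c hc using hex
  refine ⟨{ toFun := fun v j => ∑ i, c j i * v i
            map_add' := by
              intro x y
              funext j
              simp [mul_add, Finset.sum_add_distrib]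
            map_smul' := by
              intro r x
              funext j
              simp only [Pi.smul_apply, smul_eq_mul, RingHom.id_apply, Finset.mul_sum]
              apply Finset.sum_congr rfl
              intro i _
              ring }, ?_⟩
  intro z hz
  funext j
  have := congrFun (hc j) z
  simp only [Finset.sum_apply, Pi.smul_apply, smul_eq_mul, genFun] at this
  simpa using this
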